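/- arXiv:1706.08027 — 3 statements merged into one kernel-verified Lean document; each statement's English description precedes it below -/
import Mathlib

section
/- Compactification commutes with deletion and contraction up to compactification: for a 2-polymatroid P = (E, r) and A ⊆ E, one has (P^♭ \ A)^♭ = (P \ A)^♭ and (P^♭ / A)^♭ = (P / A)^♭. -/
/-- The compactification rank function of a polymatroid with ground set `F`
and rank function `s`: `s^♭(X) = s(X) + Σ_{x ∈ X} [s(F \ {x}) - s(F)]`. -/
def flatRank {α : Type*} [DecidableEq α] (F : Finset α) (s : Finset α → ℤ)
    (X : Finset α) : ℤ :=
  s X + ∑ x ∈ X, (s (F \ {x}) - s F)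

lemma aux1 {α : Type*} [DecidableEq α] (E A : Finset α) (r : Finset α → ℤ)
    {x : α} (hx : x ∈ E \ A) :
    flatRank E r ((E \ A) \ {x}) - flatRank E r (E \ A)
      = (r ((E \ A) \ {x}) - r (E \ A)) - (r (E \ {x}) - r E) := by
  simp only [flatRank, Finset.sdiff_singleton_eq_erase,
    Finset.sum_erase_eq_sub hx]
  ring

lemma aux2 {α : Type*} [DecidableEq α] (E A : Finset α) (r : Finset α → ℤ)
    {Y : Finset α} (hYA : Disjoint Y A) :
    flatRank E r (Y ∪ A) - flatRank E r A
      = (r (Y ∪ A) - r A) + ∑ y ∈ Y, (r (E \ {y}) - r E) := by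
  simp only [flatRank, Finset.sum_union hYA]
  ring

/-- Compactification commutes with deletion and contraction up to
compactification: `(P^♭ \ A)^♭ = (P \ A)^♭` and `(P^♭ / A)^♭ = (P / A)^♭`
for a 2-polymatroid `P = (E, r)` and `A ⊆ E`. -/
theorem flat_del_flat_and_flat_con_flat {α : Type*} [DecidableEq α]
    (E : Finset α) (r : Finset α → ℤ)
    (hr0 : r ∅ = 0)
    (hmono : ∀ X Y : Finset α, X ⊆ Y → Y ⊆ E → r X ≤ r Y)
    (hsubmod : ∀ X Y : Finset α, X ⊆ E → Y ⊆ E →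
      r (X ∪ Y) + r (X ∩ Y) ≤ r X + r Y)
    (h2 : ∀ e ∈ E, r {e} ≤ 2)
    (A : Finset α) (hA : A ⊆ E) :
    (∀ X : Finset α, X ⊆ E \ A →
      flatRank (E \ A) (fun Y => flatRank E r Y) X = flatRank (E \ A) r X) ∧
    (∀ X : Finset α, X ⊆ E \ A →
      flatRank (E \ A) (fun Y => flatRank E r (Y ∪ A) - flatRank E r A) X
        = flatRank (E \ A) (fun Y => r (Y ∪ A) - r A) X) := by
  constructor
  · intro X hX
    show flatRank E r X + ∑ x ∈ X,
        (flatRank E r ((E \ A) \ {x}) - flatRank E r (E \ A))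
      = r X + ∑ x ∈ X, (r ((E \ A) \ {x}) - r (E \ A))
    rw [Finset.sum_congr rfl (fun x hx => aux1 E A r (hX hx))]
    simp only [flatRank, Finset.sum_sub_distrib]
    ring
  · intro X hX
    have hXA : Disjoint X A :=
      Finset.disjoint_of_subset_left hX Finset.sdiff_disjoint
    show (flatRank E r (X ∪ A) - flatRank E r A) + ∑ x ∈ X,
        ((flatRank E r (((E \ A) \ {x}) ∪ A) - flatRank E r A)
          - (flatRank E r ((E \ A) ∪ A) - flatRank E r A))
      = (r (X ∪ A) - r A) + ∑ x ∈ X,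
        ((r (((E \ A) \ {x}) ∪ A) - r A) - (r ((E \ A) ∪ A) - r A))
    have h2' : ∀ x ∈ X,
        (flatRank E r (((E \ A) \ {x}) ∪ A) - flatRank E r A)
          - (flatRank E r ((E \ A) ∪ A) - flatRank E r A)
        = ((r (((E \ A) \ {x}) ∪ A) - r A) - (r ((E \ A) ∪ A) - r A))
          - (r (E \ {x}) - r E) := by
      intro x hx
      have hxEA : x ∈ E \ A := hX hx
      have d1 : Disjoint ((E \ A) \ {x}) A :=
        Finset.disjoint_of_subset_left (Finset.sdiff_subset) Finset.sdiff_disjoint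
      have d2 : Disjoint (E \ A) A := Finset.sdiff_disjoint
      rw [aux2 E A r d1, aux2 E A r d2,
        Finset.sdiff_singleton_eq_erase, Finset.sum_erase_eq_sub hxEA]
      ring
    rw [aux2 E A r hXA, Finset.sum_congr rfl h2']
    simp only [Finset.sum_sub_distrib]
    ring
end

section
/- Compactified deletion and contraction commute: for disjoint subsets A, B of the ground set of a 2-polymatroid P, one has (P/A \ B)^♭ = (P \ B)^♭ / A (i.e., P/A ⧹⧹ B = P ⧹⧹ B / A, where ⧹⧹ denotes deletion followed by compactification). -/
/-- Compactified deletion and contraction commute: for disjoint subsets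
`A, B` of the ground set of a 2-polymatroid `P`,
`P/A ⧹⧹ B = P ⧹⧹ B / A`, where `⧹⧹` is deletion followed by compactification. -/
theorem compactified_del_con_commute {α : Type*} [DecidableEq α]
    (E : Finset α) (r : Finset α → ℤ)
    (hr0 : r ∅ = 0)
    (hmono : ∀ X Y : Finset α, X ⊆ Y → Y ⊆ E → r X ≤ r Y)
    (hsubmod : ∀ X Y : Finset α, X ⊆ E → Y ⊆ E →
      r (X ∪ Y) + r (X ∩ Y) ≤ r X + r Y)
    (h2 : ∀ e ∈ E, r {e} ≤ 2)
    (A B : Finset α) (hA : A ⊆ E) (hB : B ⊆ E) (hAB : Disjoint A B) :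
    ∀ X : Finset α, X ⊆ (E \ A) \ B →
      flatRank ((E \ A) \ B) (fun Y => r (Y ∪ A) - r A) X
        = flatRank (E \ B) r (X ∪ A) - flatRank (E \ B) r A := by
  intro X hX
  have hXA : Disjoint X A := by
    have h1 : X ⊆ E \ A := hX.trans Finset.sdiff_subset
    exact Finset.disjoint_of_subset_left h1 Finset.sdiff_disjoint
  have hAE : ∀ a ∈ A, a ∈ E := fun a ha => hA ha
  have hAB' : ∀ a ∈ A, a ∉ B := fun a ha hb =>
    (Finset.disjoint_left.mp hAB) ha hb
  have key1 : ((E \ A) \ B) ∪ A = E \ B := by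
    ext y
    simp only [Finset.mem_union, Finset.mem_sdiff]
    constructor
    · rintro (⟨⟨h1, _⟩, h3⟩ | h)
      · exact ⟨h1, h3⟩
      · exact ⟨hAE y h, hAB' y h⟩
    · rintro ⟨h1, h2⟩
      by_cases hy : y ∈ A
      · exact Or.inr hy
      · exact Or.inl ⟨⟨h1, hy⟩, h2⟩
  have key2 : ∀ x ∈ X, (((E \ A) \ B) \ {x}) ∪ A = (E \ B) \ {x} := by
    intro x hx
    have hxA : x ∉ A := Finset.disjoint_left.mp hXA hx
    ext y
    simp only [Finset.mem_union, Finset.mem_sdiff, Finset.mem_singleton]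
    constructor
    · rintro (⟨⟨⟨h1, _⟩, h3⟩, h4⟩ | h)
      · exact ⟨⟨h1, h3⟩, h4⟩
      · exact ⟨⟨hAE y h, hAB' y h⟩, fun he => hxA (he ▸ h)⟩
    · rintro ⟨⟨h1, h2⟩, h3⟩
      by_cases hy : y ∈ A
      · exact Or.inr hy
      · exact Or.inl ⟨⟨⟨h1, hy⟩, h2⟩, h3⟩
  simp only [flatRank, key1]
  rw [Finset.sum_union hXA]
  have hsum : ∀ x ∈ X,
      (r ((((E \ A) \ B) \ {x}) ∪ A) - r A - (r (E \ B) - r A))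
        = r ((E \ B) \ {x}) - r (E \ B) := by
    intro x hx
    rw [key2 x hx]; ring
  rw [Finset.sum_congr rfl hsum]
  ring
end

section
/- For disjoint subsets X and Y of the ground set of a polymatroid M, the local connectivity in the dual satisfies ⊓_{M*}(X, Y) = ⊓_{M/(E − (X ∪ Y))}(X, Y). -/
/-- The dual rank function `r*(Z) = Σ_{e ∈ Z} r({e}) + r(E \ Z) - r(E)`. -/
def dualRank {α : Type*} [DecidableEq α] (E : Finset α) (r : Finset α → ℤ)
    (Z : Finset α) : ℤ :=
  (∑ e ∈ Z, r {e}) + r (E \ Z) - r E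

/-- For disjoint subsets `X` and `Y` of the ground set of a polymatroid `M`,
`⊓_{M*}(X, Y) = ⊓_{M/(E \ (X ∪ Y))}(X, Y)`. -/
theorem dual_localConn_eq_contract_localConn {α : Type*} [DecidableEq α]
    (E : Finset α) (r : Finset α → ℤ)
    (hr0 : r ∅ = 0)
    (hmono : ∀ X Y : Finset α, X ⊆ Y → Y ⊆ E → r X ≤ r Y)
    (hsubmod : ∀ X Y : Finset α, X ⊆ E → Y ⊆ E →
      r (X ∪ Y) + r (X ∩ Y) ≤ r X + r Y)
    (X Y : Finset α) (hX : X ⊆ E) (hY : Y ⊆ E) (hXY : Disjoint X Y) :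
    dualRank E r X + dualRank E r Y - dualRank E r (X ∪ Y)
      = (r (X ∪ (E \ (X ∪ Y))) - r (E \ (X ∪ Y)))
        + (r (Y ∪ (E \ (X ∪ Y))) - r (E \ (X ∪ Y)))
        - (r ((X ∪ Y) ∪ (E \ (X ∪ Y))) - r (E \ (X ∪ Y))) := by
  have h1 : X ∪ (E \ (X ∪ Y)) = E \ Y := by
    ext a
    simp only [Finset.mem_union, Finset.mem_sdiff]
    constructor
    · rintro (ha | ⟨hE, h⟩)
      · exact ⟨hX ha, fun hy => Finset.disjoint_left.mp hXY ha hy⟩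
      · exact ⟨hE, fun hy => h (Or.inr hy)⟩
    · rintro ⟨hE, hy⟩
      by_cases hx : a ∈ X
      · exact Or.inl hx
      · exact Or.inr ⟨hE, fun h => h.elim hx hy⟩
  have h2 : Y ∪ (E \ (X ∪ Y)) = E \ X := by
    ext a
    simp only [Finset.mem_union, Finset.mem_sdiff]
    constructor
    · rintro (ha | ⟨hE, h⟩)
      · exact ⟨hY ha, fun hx => Finset.disjoint_right.mp hXY ha hx⟩
      · exact ⟨hE, fun hx => h (Or.inl hx)⟩
    · rintro ⟨hE, hx⟩
      by_cases hy : a ∈ Y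
      · exact Or.inl hy
      · exact Or.inr ⟨hE, fun h => h.elim hx hy⟩
  have h3 : (X ∪ Y) ∪ (E \ (X ∪ Y)) = E :=
    Finset.union_sdiff_of_subset (Finset.union_subset hX hY)
  rw [h1, h2, h3]
  simp only [dualRank, Finset.sum_union hXY]
  ring
end
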